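/- arXiv:math/0611882 — 2 statements merged into one kernel-verified Lean document; each statement's English description precedes it below -/
import Mathlib

section
/- Suppose probability measures m_n on ℝ₊ with finite means converge weakly to a probability measure m ≠ δ₀ with finite mean, and the means ∫x dm_n converge to ∫x dm. Then the size-biased pickings m̄_n(dy) = (y/∫x dm_n) m_n(dy) converge weakly to m̄(dy) = (y/∫x dm) m(dy). -/
open MeasureTheory Filter
open scoped ENNReal NNReal

/-- Size-biased picking of a measure `m` on `ℝ₊` with mean `c`:
`m̄(dy) = (y/c) m(dy)`. -/
noncomputable def sizeBiased (m : Measure ℝ) (c : ℝ) : Measure ℝ :=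
  m.withDensity (fun y => ENNReal.ofReal (y / c))

lemma ae_nonneg_of_neg_null {μ : Measure ℝ} (h : μ {x | x < 0} = 0) :
    ∀ᵐ x ∂μ, 0 ≤ x := by
  rw [ae_iff]; simpa [not_le] using h

lemma sizeBiased_integral (μ : Measure ℝ) (hpos : μ {x | x < 0} = 0)
    (c : ℝ) (hc : 0 < c) (f : BoundedContinuousFunction ℝ ℝ) :
    ∫ x, f x ∂(sizeBiased μ c) = c⁻¹ * ∫ x, f x * x ∂μ := by
  have hmeas : Measurable (fun y : ℝ => (y / c).toNNReal) :=
    measurable_real_toNNReal.comp (measurable_id.div_const c)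
  have h0 := ae_nonneg_of_neg_null hpos
  have heq : sizeBiased μ c = μ.withDensity (fun y => (((y / c).toNNReal : ℝ≥0) : ℝ≥0∞)) := rfl
  rw [heq, integral_withDensity_eq_integral_smul hmeas, ← integral_const_mul]
  apply integral_congr_ae
  filter_upwards [h0] with x hx
  rw [NNReal.smul_def, smul_eq_mul, Real.coe_toNNReal']
  rw [max_eq_left (div_nonneg hx hc.le)]
  field_simp

lemma mean_pos (m : Measure ℝ) [IsProbabilityMeasure m] (hpos : m {x | x < 0} = 0)
    (hint : Integrable (fun x => x) m) (hne : m ≠ Measure.dirac 0) :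
    0 < ∫ x, x ∂m := by
  have h0 := ae_nonneg_of_neg_null hpos
  rcases (integral_nonneg_of_ae h0).lt_or_eq with h | h
  · exact h
  exfalso
  apply hne
  have hz : (fun x : ℝ => x) =ᶠ[ae m] 0 :=
    (integral_eq_zero_iff_of_nonneg_ae h0 hint).mp h.symm
  have h2 : Measure.map (fun x : ℝ => x) m = Measure.map (fun _ : ℝ => (0:ℝ)) m :=
    Measure.map_congr (g := fun _ => (0:ℝ)) hz
  rw [Measure.map_id'] at h2
  rw [h2, Measure.map_const]
  simp

/-- truncation `x ↦ min (max x 0) R` as a bounded continuous function. -/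
noncomputable def trunc (R : ℝ) : BoundedContinuousFunction ℝ ℝ :=
  BoundedContinuousFunction.ofNormedAddCommGroup (fun y => min (max y 0) R)
    (by fun_prop) |R| (fun x => by
      rw [Real.norm_eq_abs, abs_le]
      constructor
      · exact le_min ((neg_nonpos.2 (abs_nonneg R)).trans (le_max_right x 0)) (neg_abs_le R)
      · exact (min_le_right _ _).trans (le_abs_self R))

lemma trunc_apply (R x : ℝ) : trunc R x = min (max x 0) R := by
  simp [trunc]

lemma trunc_le {R x : ℝ} (hx : 0 ≤ x) : trunc R x ≤ x := by
  rw [trunc_apply]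
  exact (min_le_left _ _).trans (by rw [max_eq_left hx])

lemma trunc_tendsto (m : Measure ℝ) [IsFiniteMeasure m] (hpos : m {x | x < 0} = 0)
    (hint : Integrable (fun x => x) m) :
    Tendsto (fun N : ℕ => ∫ x, trunc N x ∂m) atTop (nhds (∫ x, x ∂m)) := by
  have h0 := ae_nonneg_of_neg_null hpos
  have hrw : ∫ x, x ∂m = ∫ x, max x 0 ∂m :=
    integral_congr_ae (by filter_upwards [h0] with x hx; rw [max_eq_left hx])
  rw [hrw]
  apply tendsto_integral_of_dominated_convergence (fun x => |x|)
  · intro n; exact (trunc n).continuous.aestronglyMeasurable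
  · exact hint.abs
  · intro n
    refine Eventually.of_forall fun x => ?_
    rw [trunc_apply, Real.norm_eq_abs, abs_le]
    constructor
    · exact le_min ((neg_nonpos.2 (abs_nonneg x)).trans (le_max_right x 0))
        ((neg_nonpos.2 (abs_nonneg x)).trans (Nat.cast_nonneg n))
    · exact (min_le_left _ _).trans (max_le (le_abs_self x) (abs_nonneg x))
  · refine Eventually.of_forall fun x => ?_
    apply tendsto_nhds_of_eventually_eq
    filter_upwards [eventually_ge_atTop ⌈max x 0⌉₊] with N hN
    rw [trunc_apply, min_eq_left]
    exact (Nat.ceil_le.mp hN)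

lemma est (μ : Measure ℝ) [IsProbabilityMeasure μ] (hpos : μ {x | x < 0} = 0)
    (hμint : Integrable (fun x => x) μ) (f : BoundedContinuousFunction ℝ ℝ) (R : ℝ) :
    |∫ x, f x * x ∂μ - ∫ x, (trunc R * f) x ∂μ|
      ≤ (‖f‖ + 1) * (∫ x, x ∂μ - ∫ x, trunc R x ∂μ) := by
  have h0 := ae_nonneg_of_neg_null hpos
  have hif : Integrable (fun x => f x * x) μ :=
    hμint.bdd_mul (c := ‖f‖) f.continuous.aestronglyMeasurable (Eventually.of_forall fun x => f.norm_coe_le_norm x)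
  have hg : Integrable (fun x => (trunc R * f) x) μ := (trunc R * f).integrable μ
  have htr : Integrable (fun x => trunc R x) μ := (trunc R).integrable μ
  rw [← integral_sub hif hg, ← integral_sub hμint htr, ← integral_const_mul]
  calc |∫ x, (f x * x - (trunc R * f) x) ∂μ|
      ≤ ∫ x, |f x * x - (trunc R * f) x| ∂μ := by
        simpa [Real.norm_eq_abs] using
          norm_integral_le_integral_norm (μ := μ) (fun x => f x * x - (trunc R * f) x)
    _ ≤ ∫ x, (‖f‖ + 1) * (x - trunc R x) ∂μ := by
        apply integral_mono_ae (hif.sub hg).abs ((hμint.sub htr).const_mul _)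
        filter_upwards [h0] with x hx
        simp only [Pi.sub_apply]
        have hxt : trunc R x ≤ x := trunc_le hx
        have : f x * x - (trunc R * f) x = f x * (x - trunc R x) := by
          simp only [BoundedContinuousFunction.coe_mul, Pi.mul_apply]; ring
        rw [this, abs_mul, abs_of_nonneg (sub_nonneg.2 hxt)]
        apply mul_le_mul_of_nonneg_right _ (sub_nonneg.2 hxt)
        calc |f x| ≤ ‖f‖ := by rw [← Real.norm_eq_abs]; exact f.norm_coe_le_norm x
          _ ≤ ‖f‖ + 1 := by linarith

lemma key_tendsto (mseq : ℕ → Measure ℝ) (m : Measure ℝ)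
    (hprobn : ∀ n, IsProbabilityMeasure (mseq n)) (hprob : IsProbabilityMeasure m)
    (hposn : ∀ n, mseq n {x | x < 0} = 0) (hpos : m {x | x < 0} = 0)
    (hintn : ∀ n, Integrable (fun x => x) (mseq n)) (hint : Integrable (fun x => x) m)
    (hweak : ∀ f : BoundedContinuousFunction ℝ ℝ,
      Tendsto (fun n => ∫ x, f x ∂(mseq n)) atTop (nhds (∫ x, f x ∂m)))
    (hmean : Tendsto (fun n => ∫ x, x ∂(mseq n)) atTop (nhds (∫ x, x ∂m)))
    (f : BoundedContinuousFunction ℝ ℝ) :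
    Tendsto (fun n => ∫ x, f x * x ∂(mseq n)) atTop (nhds (∫ x, f x * x ∂m)) := by
  haveI := hprob
  rw [Metric.tendsto_atTop]
  intro ε hε
  set K := ‖f‖ + 1 with hK
  have hK0 : (0:ℝ) < K := by positivity
  -- pick R
  have hlim : Tendsto (fun N : ℕ => K * (∫ x, x ∂m - ∫ x, trunc N x ∂m)) atTop (nhds 0) := by
    have := (tendsto_const_nhds (x := ∫ x, x ∂m) (f := atTop (α := ℕ))).sub
      (trunc_tendsto m hpos hint)
    simpa using (this.const_mul K)
  obtain ⟨R, hR⟩ := (hlim.eventually_lt_const (show (0:ℝ) < ε/8 by positivity)).exists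
  -- convergence of the auxiliary integrals
  have h1 : Tendsto (fun n => K * (∫ x, x ∂(mseq n) - ∫ x, trunc R x ∂(mseq n))) atTop
      (nhds (K * (∫ x, x ∂m - ∫ x, trunc R x ∂m))) :=
    ((hmean.sub (hweak (trunc R))).const_mul K)
  have h2 := hweak (trunc R * f)
  have hev1 : ∀ᶠ n in atTop, K * (∫ x, x ∂(mseq n) - ∫ x, trunc R x ∂(mseq n)) < ε/4 :=
    h1.eventually_lt_const (by linarith)
  have hev2 : ∀ᶠ n in atTop,
      dist (∫ x, (trunc R * f) x ∂(mseq n)) (∫ x, (trunc R * f) x ∂m) < ε/4 := by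
    rw [Metric.tendsto_atTop] at h2
    obtain ⟨N, hN⟩ := h2 (ε/4) (by positivity)
    exact eventually_atTop.2 ⟨N, hN⟩
  obtain ⟨N, hN⟩ := eventually_atTop.1 (hev1.and hev2)
  refine ⟨N, fun n hn => ?_⟩
  obtain ⟨hn1, hn2⟩ := hN n hn
  have e1 := est (mseq n) (hposn n) (hintn n) f R
  have e2 := est m hpos hint f R
  rw [Real.dist_eq] at hn2 ⊢
  have : |∫ x, f x * x ∂(mseq n) - ∫ x, f x * x ∂m|
      ≤ |∫ x, f x * x ∂(mseq n) - ∫ x, (trunc R * f) x ∂(mseq n)|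
        + |∫ x, (trunc R * f) x ∂(mseq n) - ∫ x, (trunc R * f) x ∂m|
        + |∫ x, (trunc R * f) x ∂m - ∫ x, f x * x ∂m| := by
    have := abs_sub_le (∫ x, f x * x ∂(mseq n)) (∫ x, (trunc R * f) x ∂m) (∫ x, f x * x ∂m)
    have h' := abs_sub_le (∫ x, f x * x ∂(mseq n)) (∫ x, (trunc R * f) x ∂(mseq n))
      (∫ x, (trunc R * f) x ∂m)
    linarith
  have e2' : |∫ x, (trunc R * f) x ∂m - ∫ x, f x * x ∂m| ≤ K * (∫ x, x ∂m - ∫ x, trunc R x ∂m) := by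
    rw [abs_sub_comm]; exact e2
  calc |∫ x, f x * x ∂(mseq n) - ∫ x, f x * x ∂m| ≤ _ := this
    _ < ε/4 + ε/4 + ε/8 :=
        add_lt_add (add_lt_add (e1.trans_lt hn1) hn2) (e2'.trans_lt hR)
    _ < ε := by linarith

/-- If probability measures `mₙ` on `ℝ₊` with finite means converge weakly to a
probability measure `m ≠ δ₀` with finite mean, and the means converge, then the
size-biased pickings `m̄ₙ` converge weakly to `m̄`. -/
theorem stmt_2 (mseq : ℕ → Measure ℝ) (m : Measure ℝ)
    (hprobn : ∀ n, IsProbabilityMeasure (mseq n)) (hprob : IsProbabilityMeasure m)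
    (hposn : ∀ n, mseq n {x | x < 0} = 0) (hpos : m {x | x < 0} = 0)
    (hintn : ∀ n, Integrable (fun x => x) (mseq n)) (hint : Integrable (fun x => x) m)
    (hne : m ≠ Measure.dirac 0)
    (hweak : ∀ f : BoundedContinuousFunction ℝ ℝ,
      Filter.Tendsto (fun n => ∫ x, f x ∂(mseq n)) Filter.atTop (nhds (∫ x, f x ∂m)))
    (hmean : Filter.Tendsto (fun n => ∫ x, x ∂(mseq n)) Filter.atTop
      (nhds (∫ x, x ∂m))) :
    ∀ f : BoundedContinuousFunction ℝ ℝ,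
      Filter.Tendsto
        (fun n => ∫ x, f x ∂(sizeBiased (mseq n) (∫ x, x ∂(mseq n))))
        Filter.atTop
        (nhds (∫ x, f x ∂(sizeBiased m (∫ x, x ∂m)))) := by
  haveI := hprob
  intro f
  have hc : 0 < ∫ x, x ∂m := mean_pos m hpos hint hne
  have hcn : ∀ᶠ n in atTop, 0 < ∫ x, x ∂(mseq n) := hmean.eventually_const_lt hc
  have htarget : Tendsto (fun n => (∫ x, x ∂(mseq n))⁻¹ * ∫ x, f x * x ∂(mseq n)) atTop
      (nhds ((∫ x, x ∂m)⁻¹ * ∫ x, f x * x ∂m)) :=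
    (hmean.inv₀ hc.ne').mul
      (key_tendsto mseq m hprobn hprob hposn hpos hintn hint hweak hmean f)
  rw [sizeBiased_integral m hpos _ hc f]
  apply htarget.congr'
  filter_upwards [hcn] with n hn
  exact (sizeBiased_integral (mseq n) (hposn n) _ hn f).symm
end

section
/- Let P be a probability measure on ℝ₊ with mean μ ∈ (0,∞) and Laplace transform φ with φ(t) > 0. Let S(t) be the random variable on [0,1] with density f_{S(t)}(x) = f_{S^∞}(x)1_{[0,1−φ(t)]}(x) + (|φ'(t)|/(μφ(t)))1_{(1−φ(t),1]}(x), and S^∞ the random variable with density f_{S^∞}. Then the total variation distance between law(S(t)) and law(S^∞) is at most 2|φ'(t)|/μ. -/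
open MeasureTheory
open scoped ENNReal

/-- The Laplace transform `φ(s) = ∫ e^{−sx} P(dx)` of a measure `P` on `ℝ`. -/
noncomputable def lap (P : Measure ℝ) (s : ℝ) : ℝ :=
  ∫ x, Real.exp (-(s * x)) ∂P

/-- The limiting stationary search-cost density
`f_{S^∞}(x) = −(1/μ)·φ''(φ⁻¹(1−x))/φ'(φ⁻¹(1−x))` on `[0, 1−p₀]`, `p₀ = P({0})`. -/
noncomputable def fSinf (P : Measure ℝ) (μ : ℝ) (x : ℝ) : ℝ :=
  if x ≤ 1 - (P {0}).toReal then
    -(1 / μ) * (deriv (deriv (lap P)) (Function.invFun (lap P) (1 - x)) /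
      deriv (lap P) (Function.invFun (lap P) (1 - x)))
  else 0

/-- The limiting transient search-cost density: `f_{S^∞}` below the threshold
`1 − φ(t)`, and the uniform height `|φ'(t)|/(μφ(t))` above it. -/
noncomputable def fSt (P : Measure ℝ) (μ t : ℝ) (x : ℝ) : ℝ :=
  if x ≤ 1 - lap P t then fSinf P μ x else |deriv (lap P) t| / (μ * lap P t)

open Filter Set Real Metric Topology

namespace S18

variable {P : Measure ℝ}


lemma ae_nonneg (hpos : P {x | x < 0} = 0) : ∀ᵐ x ∂P, 0 ≤ x := by
  rw [ae_iff]; simpa [not_le] using hpos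

lemma int_exp [IsProbabilityMeasure P] (hpos : P {x | x < 0} = 0)
    {s : ℝ} (hs : 0 ≤ s) : Integrable (fun x => Real.exp (-(s * x))) P := by
  refine Integrable.mono' (integrable_const 1) ?_ ?_
  · exact (Real.continuous_exp.comp (continuous_const.mul continuous_id).neg).aestronglyMeasurable
  · filter_upwards [ae_nonneg hpos] with x hx
    rw [Real.norm_eq_abs, abs_of_pos (Real.exp_pos _)]
    exact Real.exp_le_one_iff.mpr (by nlinarith)

lemma int_mul_exp (hpos : P {x | x < 0} = 0) (hint : Integrable (fun x => x) P)
    {s : ℝ} (hs : 0 ≤ s) : Integrable (fun x => x * Real.exp (-(s * x))) P := by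
  refine Integrable.mono' hint.abs ?_ ?_
  · exact (continuous_id.mul
      (Real.continuous_exp.comp (continuous_const.mul continuous_id).neg)).aestronglyMeasurable
  · filter_upwards [ae_nonneg hpos] with x hx
    rw [Real.norm_eq_abs, abs_mul, abs_of_pos (Real.exp_pos _)]
    nlinarith [abs_nonneg x, Real.exp_le_one_iff.mpr (by nlinarith : -(s*x) ≤ 0),
      Real.exp_pos (-(s*x))]


lemma hasDeriv1 [IsProbabilityMeasure P] (hpos : P {x | x < 0} = 0)
    (hint : Integrable (fun x => x) P) {s : ℝ} (hs : 0 < s) :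
    HasDerivAt (lap P) (-∫ x, x * Real.exp (-(s * x)) ∂P) s := by
  have h := hasDerivAt_integral_of_dominated_loc_of_deriv_le (μ := P)
    (F := fun (u : ℝ) (x : ℝ) => Real.exp (-(u * x)))
    (F' := fun (u : ℝ) (x : ℝ) => -(x * Real.exp (-(u * x))))
    (x₀ := s) (bound := fun x => |x|) (ball_mem_nhds s hs)
    (Eventually.of_forall fun u =>
      (Real.continuous_exp.comp (continuous_const.mul continuous_id).neg).aestronglyMeasurable)
    (int_exp hpos hs.le)
    ((continuous_id.mul
      (Real.continuous_exp.comp (continuous_const.mul continuous_id).neg)).neg).aestronglyMeasurable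
    ?_ hint.abs ?_
  · have := h.2
    rw [integral_neg] at this
    exact this
  · filter_upwards [ae_nonneg hpos] with x hx u hu
    rw [mem_ball, Real.dist_eq, abs_sub_lt_iff] at hu
    have hu0 : 0 ≤ u := by linarith [hu.1, hu.2]
    rw [norm_neg, Real.norm_eq_abs, abs_mul, abs_of_pos (Real.exp_pos _)]
    nlinarith [abs_nonneg x, Real.exp_le_one_iff.mpr (by nlinarith : -(u*x) ≤ 0),
      Real.exp_pos (-(u*x))]
  · refine Eventually.of_forall fun x => fun u _ => ?_
    have h1 : HasDerivAt (fun u : ℝ => -(u * x)) (-x) u := by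
      simpa using ((hasDerivAt_id u).mul_const x).fun_neg
    have := h1.exp
    exact this.congr_deriv (by ring)

lemma deriv_lap [IsProbabilityMeasure P] (hpos : P {x | x < 0} = 0)
    (hint : Integrable (fun x => x) P) {s : ℝ} (hs : 0 < s) :
    deriv (lap P) s = -∫ x, x * Real.exp (-(s * x)) ∂P :=
  (hasDeriv1 hpos hint hs).deriv

lemma hasDeriv2 [IsProbabilityMeasure P] (hpos : P {x | x < 0} = 0)
    (hint : Integrable (fun x => x) P)
    (hmom : ∀ s : ℝ, 0 < s → Integrable (fun x => x ^ 2 * Real.exp (-(s * x))) P)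
    {s : ℝ} (hs : 0 < s) :
    HasDerivAt (deriv (lap P)) (∫ x, x ^ 2 * Real.exp (-(s * x)) ∂P) s := by
  have h := hasDerivAt_integral_of_dominated_loc_of_deriv_le (μ := P)
    (F := fun (u : ℝ) (x : ℝ) => -(x * Real.exp (-(u * x))))
    (F' := fun (u : ℝ) (x : ℝ) => x ^ 2 * Real.exp (-(u * x)))
    (x₀ := s) (bound := fun x => x ^ 2 * Real.exp (-(s/2 * x))) (ball_mem_nhds s (half_pos hs))
    (Eventually.of_forall fun u =>
      ((continuous_id.mul
        (Real.continuous_exp.comp (continuous_const.mul continuous_id).neg)).neg).aestronglyMeasurable)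
    ((int_mul_exp hpos hint hs.le).neg)
    (((continuous_pow 2).mul
      (Real.continuous_exp.comp (continuous_const.mul continuous_id).neg)).aestronglyMeasurable)
    ?_ (hmom _ (half_pos hs)) ?_
  · have h2 := h.2
    have heq : (fun u : ℝ => ∫ x, -(x * Real.exp (-(u * x))) ∂P)
        = fun u : ℝ => -∫ x, x * Real.exp (-(u * x)) ∂P := funext fun u => integral_neg _
    rw [heq] at h2
    refine h2.congr_of_eventuallyEq ?_
    filter_upwards [isOpen_Ioi.mem_nhds (mem_Ioi.mpr hs)] with u hu
    exact deriv_lap hpos hint hu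
  · filter_upwards [ae_nonneg hpos] with x hx u hu
    rw [mem_ball, Real.dist_eq, abs_sub_lt_iff] at hu
    have hu0 : s/2 ≤ u := by linarith [hu.1, hu.2]
    rw [Real.norm_eq_abs, abs_mul, abs_of_nonneg (sq_nonneg x), abs_of_pos (Real.exp_pos _)]
    have : Real.exp (-(u*x)) ≤ Real.exp (-(s/2*x)) := Real.exp_le_exp.mpr (by nlinarith)
    nlinarith [sq_nonneg x, Real.exp_pos (-(u*x))]
  · refine Eventually.of_forall fun x => fun u _ => ?_
    have h1 : HasDerivAt (fun u : ℝ => -(u * x)) (-x) u := by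
      simpa using ((hasDerivAt_id u).mul_const x).fun_neg
    have := (h1.exp.const_mul x).fun_neg
    convert this using 1
    ring

lemma deriv2_lap [IsProbabilityMeasure P] (hpos : P {x | x < 0} = 0)
    (hint : Integrable (fun x => x) P)
    (hmom : ∀ s : ℝ, 0 < s → Integrable (fun x => x ^ 2 * Real.exp (-(s * x))) P)
    {s : ℝ} (hs : 0 < s) :
    deriv (deriv (lap P)) s = ∫ x, x ^ 2 * Real.exp (-(s * x)) ∂P :=
  (hasDeriv2 hpos hint hmom hs).deriv


lemma Ioi_pos [IsProbabilityMeasure P] (hpos : P {x | x < 0} = 0)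
    (hne : P ≠ Measure.dirac 0) : 0 < P (Ioi 0) := by
  by_contra h
  push_neg at h
  have hIoi : P (Ioi 0) = 0 := le_antisymm (by simpa using h) (zero_le)
  have hcompl : P ({(0:ℝ)}ᶜ) = 0 := by
    refine measure_mono_null (fun x hx => ?_) (measure_union_null hpos hIoi)
    rcases lt_trichotomy x 0 with h1 | h1 | h1
    · exact Or.inl h1
    · exact absurd h1 hx
    · exact Or.inr h1
  apply hne
  ext s hs
  rw [Measure.dirac_apply' _ hs]
  by_cases h0 : (0:ℝ) ∈ s
  · have h1 : P sᶜ = 0 := by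
      refine measure_mono_null ?_ hcompl
      intro x hx
      simp only [Set.mem_compl_iff, Set.mem_singleton_iff]
      intro h2
      exact hx (h2 ▸ h0)
    have h2 : P s + P sᶜ = 1 := by
      rw [measure_add_measure_compl hs, measure_univ]
    simp [Set.indicator_of_mem h0]
    rw [h1, add_zero] at h2
    exact h2
  · have h1 : P s = 0 := by
      refine measure_mono_null ?_ hcompl
      intro x hx
      simp only [Set.mem_compl_iff, Set.mem_singleton_iff]
      intro h2
      exact h0 (h2 ▸ hx)
    simp [Set.indicator_of_notMem h0, h1]

lemma I1_pos [IsProbabilityMeasure P] (hpos : P {x | x < 0} = 0)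
    (hne : P ≠ Measure.dirac 0) (hint : Integrable (fun x => x) P)
    {s : ℝ} (hs : 0 ≤ s) : 0 < ∫ x, x * Real.exp (-(s * x)) ∂P := by
  rw [integral_pos_iff_support_of_nonneg_ae ?_ (int_mul_exp hpos hint hs)]
  · refine lt_of_lt_of_le (Ioi_pos hpos hne) (measure_mono fun x hx => ?_)
    exact (mul_pos hx (Real.exp_pos _)).ne'
  · filter_upwards [ae_nonneg hpos] with x hx
    positivity

lemma lap_lt_one [IsProbabilityMeasure P] (hpos : P {x | x < 0} = 0)
    (hne : P ≠ Measure.dirac 0) {s : ℝ} (hs : 0 < s) : lap P s < 1 := by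
  have hi : Integrable (fun x => 1 - Real.exp (-(s * x))) P := by
    exact (integrable_const 1).sub (int_exp hpos hs.le)
  have key : 0 < ∫ x, (1 - Real.exp (-(s * x))) ∂P := by
    rw [integral_pos_iff_support_of_nonneg_ae ?_ hi]
    · refine lt_of_lt_of_le (Ioi_pos hpos hne) (measure_mono fun x hx => ?_)
      have hx' : 0 < x := hx
      have : Real.exp (-(s * x)) < 1 := Real.exp_lt_one_iff.mpr (by nlinarith)
      simp only [Function.mem_support]
      intro h
      nlinarith
    · filter_upwards [ae_nonneg hpos] with x hx
      simp only [Pi.zero_apply]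
      have : Real.exp (-(s * x)) ≤ 1 := Real.exp_le_one_iff.mpr (by nlinarith)
      linarith
  rw [integral_sub (integrable_const 1) (int_exp hpos hs.le), integral_const] at key
  simp only [measure_univ, probReal_univ, ENNReal.toReal_one, smul_eq_mul, one_mul, mul_one] at key
  have : (∫ x, Real.exp (-(s * x)) ∂P) = lap P s := rfl
  linarith [key]

lemma lap_gt_p0 [IsProbabilityMeasure P] (hpos : P {x | x < 0} = 0)
    (hne : P ≠ Measure.dirac 0) {s : ℝ} (hs : 0 < s) :
    (P {0}).toReal < lap P s := by
  have hind : Integrable (({0} : Set ℝ).indicator (fun _ => (1:ℝ))) P :=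
    (integrable_const 1).indicator (measurableSet_singleton 0)
  have key : 0 < ∫ x, (Real.exp (-(s * x)) - ({0} : Set ℝ).indicator (fun _ => (1:ℝ)) x) ∂P := by
    have hi : Integrable (fun x => Real.exp (-(s * x)) - ({0} : Set ℝ).indicator (fun _ => (1:ℝ)) x) P := by
      exact (int_exp hpos hs.le).sub hind
    rw [integral_pos_iff_support_of_nonneg_ae ?_ hi]
    · refine lt_of_lt_of_le (Ioi_pos hpos hne) (measure_mono fun x hx => ?_)
      simp only [Function.mem_support]
      rw [Set.indicator_of_notMem (by simpa using hx.ne' : x ∉ ({0} : Set ℝ))]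
      simpa using (Real.exp_pos (-(s*x))).ne'
    · filter_upwards [ae_nonneg hpos] with x hx
      simp only [Pi.zero_apply]
      rcases eq_or_lt_of_le hx with h | h
      · simp [← h]
      · rw [Set.indicator_of_notMem (by simpa using h.ne' : x ∉ ({0} : Set ℝ))]
        have := Real.exp_pos (-(s*x))
        linarith
  rw [integral_sub (int_exp hpos hs.le) hind, integral_indicator_const _ (measurableSet_singleton 0)] at key
  simp only [smul_eq_mul, mul_one, measureReal_def] at key
  have : (∫ x, Real.exp (-(s * x)) ∂P) = lap P s := rfl
  linarith [key]

lemma lap_pos' [IsProbabilityMeasure P] (hpos : P {x | x < 0} = 0)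
    (hne : P ≠ Measure.dirac 0) {s : ℝ} (hs : 0 < s) : 0 < lap P s :=
  lt_of_le_of_lt ENNReal.toReal_nonneg (lap_gt_p0 hpos hne hs)

lemma lap_anti [IsProbabilityMeasure P] (hpos : P {x | x < 0} = 0)
    (hne : P ≠ Measure.dirac 0) (hint : Integrable (fun x => x) P) :
    StrictAntiOn (lap P) (Ioi 0) := by
  refine strictAntiOn_of_deriv_neg (convex_Ioi 0) ?_ ?_
  · exact fun x hx => ((hasDeriv1 hpos hint hx).continuousAt).continuousWithinAt
  · intro x hx
    rw [interior_Ioi] at hx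
    rw [deriv_lap hpos hint hx]
    simpa using I1_pos hpos hne hint hx.le

lemma invFun_lap [IsProbabilityMeasure P] (hpos : P {x | x < 0} = 0)
    (hne : P ≠ Measure.dirac 0) (hint : Integrable (fun x => x) P)
    {s : ℝ} (hs : 0 < s) : Function.invFun (lap P) (lap P s) = s := by
  have hex : ∃ u, lap P u = lap P s := ⟨s, rfl⟩
  have heq : lap P (Function.invFun (lap P) (lap P s)) = lap P s := Function.invFun_eq hex
  set u := Function.invFun (lap P) (lap P s) with hu
  have hu0 : 0 < u := by
    by_contra h
    push_neg at h
    by_cases hi : Integrable (fun x => Real.exp (-(u * x))) P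
    · have h1 : 1 ≤ lap P u := by
        have : (1:ℝ) = ∫ _, (1:ℝ) ∂P := by simp
        rw [this]
        refine integral_mono_ae (integrable_const 1) hi ?_
        filter_upwards [ae_nonneg hpos] with x hx
        simpa using Real.exp_le_exp.mpr (by nlinarith : (0:ℝ) ≤ -(u * x))
      rw [heq] at h1
      linarith [lap_lt_one hpos hne hs]
    · have h1 : lap P u = 0 := integral_undef hi
      rw [heq] at h1
      linarith [lap_pos' hpos hne hs]
  exact (lap_anti hpos hne hint).injOn hu0 hs heq

lemma tendsto_lap [IsProbabilityMeasure P] (hpos : P {x | x < 0} = 0) :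
    Tendsto (lap P) atTop (𝓝 ((P {0}).toReal)) := by
  have h := tendsto_integral_filter_of_dominated_convergence (μ := P) (l := atTop)
    (F := fun (s : ℝ) (x : ℝ) => Real.exp (-(s * x)))
    (f := ({0} : Set ℝ).indicator (fun _ => (1:ℝ)))
    (bound := fun _ => (1:ℝ))
    (Eventually.of_forall fun u =>
      (Real.continuous_exp.comp (continuous_const.mul continuous_id).neg).aestronglyMeasurable)
    ?_ (integrable_const 1) ?_
  · have : ∫ x, ({0} : Set ℝ).indicator (fun _ => (1:ℝ)) x ∂P = (P {0}).toReal := by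
      rw [integral_indicator_const _ (measurableSet_singleton 0)]; simp [measureReal_def]
    rwa [this] at h
  · filter_upwards [eventually_ge_atTop (0:ℝ)] with s hs
    filter_upwards [ae_nonneg hpos] with x hx
    rw [Real.norm_eq_abs, abs_of_pos (Real.exp_pos _)]
    exact Real.exp_le_one_iff.mpr (by nlinarith)
  · filter_upwards [ae_nonneg hpos] with x hx
    rcases eq_or_lt_of_le hx with h | h
    · simp only [← h]
      simpa using tendsto_const_nhds
    · rw [Set.indicator_of_notMem (by simpa using h.ne' : x ∉ ({0} : Set ℝ))]
      have h1 : Tendsto (fun s : ℝ => s * x) atTop atTop :=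
        Tendsto.atTop_mul_const h tendsto_id
      exact Real.tendsto_exp_atBot.comp (tendsto_neg_atTop_atBot.comp h1)

lemma tendsto_deriv_lap [IsProbabilityMeasure P] (hpos : P {x | x < 0} = 0)
    (hint : Integrable (fun x => x) P) :
    Tendsto (deriv (lap P)) atTop (𝓝 0) := by
  have h := tendsto_integral_filter_of_dominated_convergence (μ := P) (l := atTop)
    (F := fun (s : ℝ) (x : ℝ) => x * Real.exp (-(s * x)))
    (f := fun _ => (0:ℝ)) (bound := fun x => |x|)
    (Eventually.of_forall fun u =>
      (continuous_id.mul
        (Real.continuous_exp.comp (continuous_const.mul continuous_id).neg)).aestronglyMeasurable)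
    ?_ hint.abs ?_
  · rw [integral_zero] at h
    have h2 : Tendsto (fun s : ℝ => -∫ x, x * Real.exp (-(s * x)) ∂P) atTop (𝓝 0) := by
      simpa using h.neg
    refine Tendsto.congr' ?_ h2
    filter_upwards [eventually_gt_atTop (0:ℝ)] with s hs
    exact (deriv_lap hpos hint hs).symm
  · filter_upwards [eventually_ge_atTop (0:ℝ)] with s hs
    filter_upwards [ae_nonneg hpos] with x hx
    rw [Real.norm_eq_abs, abs_mul, abs_of_pos (Real.exp_pos _)]
    nlinarith [abs_nonneg x, Real.exp_le_one_iff.mpr (by nlinarith : -(s*x) ≤ 0),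
      Real.exp_pos (-(s*x))]
  · filter_upwards [ae_nonneg hpos] with x hx
    rcases eq_or_lt_of_le hx with h | h
    · simp only [← h]
      simpa using tendsto_const_nhds
    · have h1 : Tendsto (fun s : ℝ => Real.exp (-(s * x))) atTop (𝓝 0) :=
        Real.tendsto_exp_atBot.comp (tendsto_neg_atTop_atBot.comp
          (Tendsto.atTop_mul_const h tendsto_id))
      simpa using h1.const_mul x


end S18

open S18

/-- The total variation distance between `law(S(t))` (with density `f_{S(t)}`) and
`law(S^∞)` (with density `f_{S^∞}`) is at most `2|φ'(t)|/μ`: here it is expressed as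
`∫₀¹ |f_{S(t)} − f_{S^∞}| ≤ 2|φ'(t)|/μ`. -/
theorem stmt_18 (P : Measure ℝ) (hprob : IsProbabilityMeasure P)
    (hpos : P {x | x < 0} = 0) (hne : P ≠ Measure.dirac 0)
    (hint : Integrable (fun x => x) P)
    (hmom : ∀ s : ℝ, 0 < s → Integrable (fun x => x ^ 2 * Real.exp (-(s * x))) P)
    (μ : ℝ) (hμ : μ = ∫ x, x ∂P) (hμpos : 0 < μ)
    (t : ℝ) (ht : 0 < t) (hφt : 0 < lap P t) :
    ∫ x in (0:ℝ)..1, |fSt P μ t x - fSinf P μ x| ≤ 2 * |deriv (lap P) t| / μ := by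
  by_cases hI : IntervalIntegrable (fun x => |fSt P μ t x - fSinf P μ x|) volume 0 1
  swap
  · rw [intervalIntegral.integral_undef hI]
    positivity
  have hlt1 : lap P t < 1 := lap_lt_one hpos hne ht
  have hgt : (P {0}).toReal < lap P t := lap_gt_p0 hpos hne ht
  have hp0nn : (0:ℝ) ≤ (P {0}).toReal := ENNReal.toReal_nonneg
  have ha0 : (0:ℝ) < 1 - lap P t := by linarith
  have hab : 1 - lap P t < 1 - (P {0}).toReal := by linarith
  have hb1 : 1 - (P {0}).toReal ≤ 1 := by linarith
  have ha1 : 1 - lap P t < 1 := by linarith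
  have hd1t : deriv (lap P) t = -∫ x, x * Real.exp (-(t * x)) ∂P := deriv_lap hpos hint ht
  have hI1tpos : (0:ℝ) < ∫ x, x * Real.exp (-(t * x)) ∂P := I1_pos hpos hne hint ht.le
  have habs : |deriv (lap P) t| = ∫ x, x * Real.exp (-(t * x)) ∂P := by
    rw [hd1t, abs_neg, abs_of_pos hI1tpos]
  have hc0 : (0:ℝ) ≤ (∫ x, x * Real.exp (-(t * x)) ∂P) / (μ * lap P t) :=
    le_of_lt (div_pos hI1tpos (mul_pos hμpos hφt))
  -- the substitution map
  have himg : (fun s => 1 - lap P s) '' Ioi t = Ioo (1 - lap P t) (1 - (P {0}).toReal) := by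
    apply Subset.antisymm
    · rintro y ⟨s, hs, rfl⟩
      have hst : t < s := hs
      have h1 : lap P s < lap P t :=
        lap_anti hpos hne hint (mem_Ioi.mpr ht) (mem_Ioi.mpr (ht.trans hst)) hst
      have h2 : (P {0}).toReal < lap P s := lap_gt_p0 hpos hne (ht.trans hst)
      refine ⟨?_, ?_⟩
      · show 1 - lap P t < 1 - lap P s
        linarith
      · show 1 - lap P s < 1 - (P {0}).toReal
        linarith
    · rintro y ⟨hy1, hy2⟩
      have h1 : (P {0}).toReal < 1 - y := by linarith
      obtain ⟨S, hS1, hS2⟩ :=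
        (((tendsto_lap hpos).eventually_lt_const h1).and (eventually_gt_atTop t)).exists
      have hcont : ContinuousOn (fun s => 1 - lap P s) (Icc t S) := by
        intro x hx
        exact (continuous_const.continuousAt.sub
          (hasDeriv1 hpos hint (lt_of_lt_of_le ht hx.1)).continuousAt).continuousWithinAt
      have hy : y ∈ Ioo ((fun s => 1 - lap P s) t) ((fun s => 1 - lap P s) S) :=
        ⟨hy1, by simp only; linarith⟩
      obtain ⟨s, hs, hsy⟩ := intermediate_value_Ioo hS2.le hcont hy
      exact ⟨s, hs.1, hsy⟩
  have hψderiv : ∀ s ∈ Ioi t, HasDerivWithinAt (fun u => 1 - lap P u)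
      (∫ x, x * Real.exp (-(s * x)) ∂P) (Ioi t) s := by
    intro s hs
    have h := (hasDeriv1 hpos hint (ht.trans hs)).const_sub 1
    rw [neg_neg] at h
    exact h.hasDerivWithinAt
  have hinj : InjOn (fun u => 1 - lap P u) (Ioi t) := by
    intro s1 h1 s2 h2 h
    have : lap P s1 = lap P s2 := by simpa [sub_right_inj] using h
    exact (lap_anti hpos hne hint).injOn (mem_Ioi.mpr (ht.trans h1))
      (mem_Ioi.mpr (ht.trans h2)) this
  have hval : ∀ s ∈ Ioi t, fSinf P μ (1 - lap P s) =
      μ⁻¹ * ((∫ x, x ^ 2 * Real.exp (-(s * x)) ∂P) / (∫ x, x * Real.exp (-(s * x)) ∂P)) := by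
    intro s hs
    have hs0 : 0 < s := ht.trans hs
    have hbr : 1 - lap P s ≤ 1 - (P {0}).toReal := by
      linarith [lap_gt_p0 hpos hne hs0]
    rw [fSinf, if_pos hbr, sub_sub_cancel, invFun_lap hpos hne hint hs0,
      deriv2_lap hpos hint hmom hs0, deriv_lap hpos hint hs0]
    have hI1 : (∫ x, x * Real.exp (-(s * x)) ∂P) ≠ 0 := (I1_pos hpos hne hint hs0.le).ne'
    field_simp
    congr 1; funext x; ring
  have hI2nn : ∀ x ∈ Ioi t, (0:ℝ) ≤ ∫ y, y ^ 2 * Real.exp (-(x * y)) ∂P := by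
    intro x _
    exact integral_nonneg fun y => by positivity
  have hcont2 : ContinuousWithinAt (deriv (lap P)) (Ici t) t :=
    ((hasDeriv2 hpos hint hmom ht).continuousAt).continuousWithinAt
  have hder2 : ∀ x ∈ Ioi t, HasDerivAt (deriv (lap P))
      (∫ y, y ^ 2 * Real.exp (-(x * y)) ∂P) x :=
    fun x hx => hasDeriv2 hpos hint hmom (ht.trans hx)
  have hI2int : IntegrableOn (fun x => ∫ y, y ^ 2 * Real.exp (-(x * y)) ∂P) (Ioi t) volume :=
    integrableOn_Ioi_deriv_of_nonneg hcont2 hder2 hI2nn (tendsto_deriv_lap hpos hint)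
  have hI2sum : ∫ x in Ioi t, (∫ y, y ^ 2 * Real.exp (-(x * y)) ∂P)
      = ∫ x, x * Real.exp (-(t * x)) ∂P := by
    rw [integral_Ioi_of_hasDerivAt_of_nonneg hcont2 hder2 hI2nn (tendsto_deriv_lap hpos hint),
      hd1t]
    ring
  have hEq : EqOn (fun s => |∫ x, x * Real.exp (-(s * x)) ∂P| • fSinf P μ (1 - lap P s))
      (fun s => μ⁻¹ * ∫ y, y ^ 2 * Real.exp (-(s * y)) ∂P) (Ioi t) := by
    intro s hs
    have hs0 : 0 < s := ht.trans hs
    have hI1p : (0:ℝ) < ∫ x, x * Real.exp (-(s * x)) ∂P := I1_pos hpos hne hint hs0.le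
    simp only
    rw [hval s hs, abs_of_pos hI1p, smul_eq_mul]
    field_simp
    have e : (∫ x, x * Real.exp (-(x * s)) ∂P) = ∫ x, x * Real.exp (-(s * x)) ∂P := by
      congr 1; funext x; ring
    rw [e]; ring
  have hchg : ∫ x in Ioo (1 - lap P t) (1 - (P {0}).toReal), fSinf P μ x
      = μ⁻¹ * ∫ x, x * Real.exp (-(t * x)) ∂P := by
    rw [← himg, integral_image_eq_integral_abs_deriv_smul measurableSet_Ioi hψderiv hinj,
      setIntegral_congr_fun measurableSet_Ioi hEq, integral_const_mul, hI2sum]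
  have hintOn : IntegrableOn (fSinf P μ) (Ioo (1 - lap P t) (1 - (P {0}).toReal)) volume := by
    rw [← himg,
      integrableOn_image_iff_integrableOn_abs_deriv_smul measurableSet_Ioi hψderiv hinj]
    exact IntegrableOn.congr_fun (hI2int.const_mul μ⁻¹) (fun s hs => (hEq hs).symm)
      measurableSet_Ioi
  have hfnn : ∀ x ∈ Ioo (1 - lap P t) (1 - (P {0}).toReal), 0 ≤ fSinf P μ x := by
    intro x hx
    rw [← himg] at hx
    obtain ⟨s, hs, rfl⟩ := hx
    simp only
    rw [hval s hs]
    have hs0 : 0 < s := ht.trans hs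
    exact mul_nonneg (inv_nonneg.mpr hμpos.le)
      (div_nonneg (hI2nn s hs) (I1_pos hpos hne hint hs0.le).le)
  -- split the interval integral
  have h0a : IntervalIntegrable (fun x => |fSt P μ t x - fSinf P μ x|) volume 0 (1 - lap P t) := by
    refine hI.mono_set ?_
    rw [uIcc_of_le ha0.le, uIcc_of_le (by norm_num : (0:ℝ) ≤ 1)]
    exact Icc_subset_Icc le_rfl ha1.le
  have ha1' : IntervalIntegrable (fun x => |fSt P μ t x - fSinf P μ x|) volume (1 - lap P t) 1 := by
    refine hI.mono_set ?_
    rw [uIcc_of_le ha1.le, uIcc_of_le (by norm_num : (0:ℝ) ≤ 1)]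
    exact Icc_subset_Icc ha0.le le_rfl
  rw [← intervalIntegral.integral_add_adjacent_intervals h0a ha1']
  have hfirst : ∫ x in (0:ℝ)..(1 - lap P t), |fSt P μ t x - fSinf P μ x| = 0 := by
    rw [intervalIntegral.integral_congr (g := fun _ => (0:ℝ)) ?_, intervalIntegral.integral_const]
    · simp
    · intro x hx
      rw [uIcc_of_le ha0.le] at hx
      have hxa : x ≤ 1 - lap P t := hx.2
      simp only [fSt]
      rw [if_pos hxa]
      simp
  rw [hfirst, zero_add, intervalIntegral.integral_of_le ha1.le]
  -- bound on (a, 1]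
  have hInt1 : IntegrableOn (fun x => |fSt P μ t x - fSinf P μ x|) (Ioc (1 - lap P t) 1) volume :=
    ha1'.1
  have hIndInt : Integrable ((Ioo (1 - lap P t) (1 - (P {0}).toReal)).indicator (fSinf P μ)) volume :=
    hintOn.integrable_indicator measurableSet_Ioo
  have hInt2 : IntegrableOn (fun x => (∫ y, y * Real.exp (-(t * y)) ∂P) / (μ * lap P t)
      + (Ioo (1 - lap P t) (1 - (P {0}).toReal)).indicator (fSinf P μ) x)
      (Ioc (1 - lap P t) 1) volume := by
    exact (integrableOn_const measure_Ioc_lt_top.ne).add hIndInt.integrableOn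
  have hae : (fun x => |fSt P μ t x - fSinf P μ x|)
      ≤ᵐ[volume.restrict (Ioc (1 - lap P t) 1)]
      (fun x => (∫ y, y * Real.exp (-(t * y)) ∂P) / (μ * lap P t)
        + (Ioo (1 - lap P t) (1 - (P {0}).toReal)).indicator (fSinf P μ) x) := by
    have hbne : ∀ᵐ x ∂(volume.restrict (Ioc (1 - lap P t) 1)), x ≠ 1 - (P {0}).toReal := by
      refine ae_restrict_of_ae ?_
      rw [ae_iff]
      have : {x : ℝ | ¬x ≠ 1 - (P {0}).toReal} = {1 - (P {0}).toReal} := by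
        ext x; simp
      rw [this]
      exact Real.volume_singleton
    filter_upwards [ae_restrict_mem measurableSet_Ioc, hbne] with x hx hxb
    have hxa : 1 - lap P t < x := hx.1
    simp only [fSt]
    rw [if_neg (not_le.mpr hxa), habs]
    by_cases hxb2 : x < 1 - (P {0}).toReal
    · rw [Set.indicator_of_mem
        (show x ∈ Ioo (1 - lap P t) (1 - (P {0}).toReal) from ⟨hxa, hxb2⟩) (fSinf P μ)]
      have h1 : 0 ≤ fSinf P μ x := hfnn x ⟨hxa, hxb2⟩
      refine abs_le.mpr ⟨by linarith, by linarith⟩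
    · have hxbgt : 1 - (P {0}).toReal < x := lt_of_le_of_ne (not_lt.mp hxb2) (Ne.symm hxb)
      rw [Set.indicator_of_notMem (fun h => absurd h.2 (not_lt.mpr hxbgt.le))]
      have h0 : fSinf P μ x = 0 := by
        simp only [fSinf]
        rw [if_neg (not_le.mpr hxbgt)]
      rw [h0, sub_zero, abs_of_nonneg hc0, add_zero]
  refine le_trans (setIntegral_mono_ae_restrict hInt1 hInt2 hae) ?_
  rw [integral_add (integrableOn_const measure_Ioc_lt_top.ne).integrable hIndInt.integrableOn,
    setIntegral_const, setIntegral_indicator measurableSet_Ioo]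
  have hcap : Ioc (1 - lap P t) 1 ∩ Ioo (1 - lap P t) (1 - (P {0}).toReal)
      = Ioo (1 - lap P t) (1 - (P {0}).toReal) :=
    Set.inter_eq_self_of_subset_right (fun x hx => ⟨hx.1, hx.2.le.trans hb1⟩)
  rw [hcap, hchg, Real.volume_real_Ioc_of_le (by linarith), habs]
  have hφ0 : lap P t ≠ 0 := hφt.ne'
  have hμ0 : μ ≠ 0 := hμpos.ne'
  rw [smul_eq_mul]
  have : (1 - (1 - lap P t)) * ((∫ y, y * Real.exp (-(t * y)) ∂P) / (μ * lap P t))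
      + μ⁻¹ * ∫ x, x * Real.exp (-(t * x)) ∂P
      = 2 * (∫ x, x * Real.exp (-(t * x)) ∂P) / μ := by
    field_simp
    have e : (∫ y, y * Real.exp (-(y * t)) ∂P) = ∫ x, x * Real.exp (-(t * x)) ∂P := by
      congr 1; funext x; ring
    rw [e]; ring
  rw [this]
end
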